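/- Expansion of the energy function in terms of the dispersions. Fix an integer N ≥ 1 and set n = 2N. There exist δ > 0 and K > 0 such that for every θ = (θ_1, …, θ_n) ∈ ℝⁿ with |θ_k| < δ for all k and satisfying the constraint ∑_{k=1}^N sin θ_k = ∑_{k=N+1}^{2N} sin θ_k, one has | ℰ − (D_L − D_U) / (4 (1 − z²)^{3/2}) | ≤ K (D_L + D_U)^{3/2} · max_k |θ_k|, where z = (1/N) ∑_{k=1}^N sin θ_k, D_U = (1/N) ∑_{k=1}^N (sin θ_k − z)², D_L = (1/N) ∑_{k=N+1}^{2N} (sin θ_k − z)², and ℰ = (1/n) ( ∑_{k=1}^N cos θ_k − ∑_{k=N+1}^{2N} cos θ_k ). -/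

import Mathlib

open scoped BigOperators

lemma cube_sum {N : ℕ} (g : Fin N → ℝ) :
    ∑ k, |g k|^3 ≤ Real.sqrt (∑ k, (g k)^2) * ∑ k, (g k)^2 := by
  rw [Finset.mul_sum]
  apply Finset.sum_le_sum
  intro k _
  have hk : |g k| ≤ Real.sqrt (∑ j, (g j)^2) := by
    rw [← Real.sqrt_sq_eq_abs]
    exact Real.sqrt_le_sqrt (Finset.single_le_sum (fun j _ => sq_nonneg (g j)) (Finset.mem_univ k))
  calc |g k|^3 = |g k| * (g k)^2 := by rw [← sq_abs]; ring
    _ ≤ _ := mul_le_mul_of_nonneg_right hk (sq_nonneg _)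

lemma quart_sum {N : ℕ} (g : Fin N → ℝ) :
    ∑ k, (g k)^4 ≤ (∑ k, (g k)^2)^2 := by
  have h : ∑ k, (g k)^4 ≤ ∑ k, (∑ j, (g j)^2) * (g k)^2 := by
    apply Finset.sum_le_sum
    intro k _
    have hk : (g k)^2 ≤ ∑ j, (g j)^2 :=
      Finset.single_le_sum (fun j _ => sq_nonneg (g j)) (Finset.mem_univ k)
    calc (g k)^4 = (g k)^2 * (g k)^2 := by ring
      _ ≤ _ := mul_le_mul_of_nonneg_right hk (sq_nonneg _)
  calc ∑ k, (g k)^4 ≤ ∑ k, (∑ j, (g j)^2) * (g k)^2 := h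
    _ = (∑ j, (g j)^2) * ∑ k, (g k)^2 := by rw [← Finset.mul_sum]
    _ = _ := (sq _).symm

lemma cos_eq_sqrt (x : ℝ) (hx : |x| ≤ 1/10) :
    Real.sqrt (1 - Real.sin x ^ 2) = Real.cos x := by
  have h1 : 1 - Real.sin x ^ 2 = Real.cos x ^ 2 := by
    have := Real.sin_sq_add_cos_sq x; linarith
  rw [h1]
  apply Real.sqrt_sq
  apply Real.cos_nonneg_of_mem_Icc
  have hpi := Real.pi_gt_three
  have := abs_le.mp hx
  constructor <;> [linarith; linarith]

lemma rearrange (n w ca cb su sv : ℝ) (hn : n ≠ 0) (hw : w ≠ 0) :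
    (ca - cb)/(2*n) - (sv/n - su/n)/(4*w^3) =
      ((ca - (n*w - su/(2*w^3))) - (cb - (n*w - sv/(2*w^3))))/(2*n) := by
  field_simp
  ring

lemma final_core (n m su sv rN rS qu qv : ℝ) (hm : 0 ≤ m) (hsu : 0 ≤ su) (hsv : 0 ≤ sv)
    (hrN2 : rN^2 = n) (hrS2 : rS^2 = sv+su) (hrN1 : 1 ≤ rN) (hrS0 : 0 ≤ rS)
    (hrSbd : rS ≤ 2*rN*m) (hqu : qu ≤ rS) (hqv : qv ≤ rS) :
    (2*m*(qu * su) + su^2 + (2*m*(qv * sv) + sv^2))/(2*n)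
      ≤ 4*n*((sv+su)/n * (rS/rN)) * m := by
  have hrNpos : (0:ℝ) < rN := by linarith
  have hnpos : (0:ℝ) < n := by nlinarith
  have hn : n ≠ 0 := ne_of_gt hnpos
  have hRHS : 4*n*((sv+su)/n * (rS/rN)) * m = 4*(sv+su)*rS*m/rN := by
    field_simp
  rw [hRHS, div_le_div_iff₀ (by linarith) hrNpos]
  have t1 : 2*m*(qu*su) ≤ 2*m*(rS*su) :=
    mul_le_mul_of_nonneg_left (mul_le_mul_of_nonneg_right hqu hsu) (by linarith)
  have t2 : 2*m*(qv*sv) ≤ 2*m*(rS*sv) :=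
    mul_le_mul_of_nonneg_left (mul_le_mul_of_nonneg_right hqv hsv) (by linarith)
  have t3 : su^2 + sv^2 ≤ (sv+su)*rS^2 := by nlinarith
  have t3' : (sv+su)*rS^2 ≤ (sv+su)*(rS*(2*rN*m)) :=
    mul_le_mul_of_nonneg_left (by nlinarith [mul_le_mul_of_nonneg_left hrSbd hrS0]) (by linarith)
  have k5 : 0 ≤ (rN - 1)*(m*(rS*(sv+su))) :=
    mul_nonneg (by linarith) (by positivity)
  have key : 2*m*(qu*su) + su^2 + (2*m*(qv*sv) + sv^2) ≤ 4*rN*m*rS*(sv+su) := by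
    nlinarith [t1, t2, t3, t3', k5]
  calc (2*m*(qu*su) + su^2 + (2*m*(qv*sv) + sv^2)) * rN
      ≤ (4*rN*m*rS*(sv+su)) * rN := mul_le_mul_of_nonneg_right key (by linarith)
    _ = 4*n*(m*(rS*(sv+su))) := by linear_combination (4*m*rS*(sv+su))*hrN2
    _ ≤ 8*n*(m*(rS*(sv+su))) := by
        have hX : 0 ≤ n*(m*(rS*(sv+su))) := by positivity
        linarith
    _ = 4*(sv+su)*rS*m*(2*n) := by ring

lemma final_arith (n m su sv : ℝ) (hn : 1 ≤ n) (hm : 0 ≤ m) (hsu : 0 ≤ su) (hsv : 0 ≤ sv)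
    (hbd : su + sv ≤ 2*n*m^2) :
    (2*m*(Real.sqrt su * su) + su^2 + (2*m*(Real.sqrt sv * sv) + sv^2))/(2*n)
      ≤ 4*n*((sv+su)/n * (Real.sqrt (sv+su)/Real.sqrt n)) * m := by
  have hrN2 : Real.sqrt n ^ 2 = n := Real.sq_sqrt (by linarith)
  have hrS2 : Real.sqrt (sv+su) ^ 2 = sv+su := Real.sq_sqrt (by linarith)
  have hrN1 : 1 ≤ Real.sqrt n := by
    rw [show (1:ℝ) = Real.sqrt 1 by rw [Real.sqrt_one]]
    exact Real.sqrt_le_sqrt hn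
  have hrSbd : Real.sqrt (sv+su) ≤ 2*Real.sqrt n*m := by
    have h1 : sv + su ≤ (2*Real.sqrt n*m)^2 := by nlinarith
    calc Real.sqrt (sv+su) ≤ Real.sqrt ((2*Real.sqrt n*m)^2) := Real.sqrt_le_sqrt h1
      _ = 2*Real.sqrt n*m := Real.sqrt_sq (by positivity)
  exact final_core n m su sv _ _ _ _ hm hsu hsv hrN2 hrS2 hrN1 (Real.sqrt_nonneg _)
    hrSbd (Real.sqrt_le_sqrt (by linarith)) (Real.sqrt_le_sqrt (by linarith))

lemma alg_bound (z u w f : ℝ) (hw2 : w^2 = 1 - z^2) (hf2 : f^2 = 1 - (z+u)^2)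
    (hw9 : 9/10 ≤ w) (hf9 : 9/10 ≤ f) (hz : |z| ≤ 1/10) (hu : |u| ≤ 1/5) :
    |f - (w - z*u/w - u^2/(2*w^3))| ≤ 2 * |z| * |u| ^ 3 + u^4 := by
  have hz2 : z^2 ≤ 1/100 := by nlinarith [sq_abs z, abs_nonneg z]
  have hu2 : u^2 ≤ 1/25 := by nlinarith [sq_abs u, abs_nonneg u]
  have hwpos : (0:ℝ) < w := by linarith
  have hw : w ≠ 0 := ne_of_gt hwpos
  have hPlb : (8:ℝ)/10 ≤ w - z*u/w - u^2/(2*w^3) := by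
    have h1 : |z*u/w| ≤ 1/25 := by
      rw [abs_div, abs_mul, abs_of_pos hwpos, div_le_iff₀ hwpos]
      nlinarith [abs_nonneg z, abs_nonneg u]
    have h1' : z*u/w ≤ 1/25 := le_trans (le_abs_self _) h1
    have h2 : u^2/(2*w^3) ≤ 1/25 := by
      rw [div_le_iff₀ (by positivity)]
      nlinarith
    linarith
  have hfP : 1 ≤ f + (w - z*u/w - u^2/(2*w^3)) := by linarith
  have hkey : f^2 - (w - z*u/w - u^2/(2*w^3))^2 = -(z*u^3/w^4) - u^4/(4*w^6) := by
    rw [hf2]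
    field_simp
    linear_combination (-16*u^2*w^4 - 16*w^6) * hw2
  have hdiff : f - (w - z*u/w - u^2/(2*w^3)) =
      (f^2 - (w - z*u/w - u^2/(2*w^3))^2)/(f + (w - z*u/w - u^2/(2*w^3))) := by
    rw [eq_div_iff (by intro h; rw [h] at hfP; linarith : f + (w - z*u/w - u^2/(2*w^3)) ≠ 0)]
    ring
  rw [hdiff, abs_div, abs_of_pos (show (0:ℝ) < f + (w - z*u/w - u^2/(2*w^3)) by linarith)]
  have hnum : |f^2 - (w - z*u/w - u^2/(2*w^3))^2| ≤ 2 * |z| * |u| ^ 3 + u^4 := by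
    rw [hkey]
    have hw4 : (1:ℝ)/2 ≤ w^4 := by nlinarith
    have hw6 : (1:ℝ)/4 ≤ w^6 := by nlinarith
    have e1 : |z*u^3/w^4| ≤ 2 * |z| * |u| ^ 3 := by
      rw [abs_div, abs_mul, abs_of_pos (show (0:ℝ) < w^4 by positivity),
        div_le_iff₀ (show (0:ℝ) < w^4 by positivity), abs_pow]
      have hnn : (0:ℝ) ≤ |z| * |u|^3 := mul_nonneg (abs_nonneg z) (pow_nonneg (abs_nonneg u) 3)
      have h2w : (1:ℝ) ≤ 2*w^4 := by linarith
      have := mul_le_mul_of_nonneg_left h2w hnn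
      linarith
    have e2 : |u^4/(4*w^6)| ≤ u^4 := by
      rw [abs_div, abs_of_nonneg (show (0:ℝ) ≤ u^4 by positivity),
        abs_of_pos (show (0:ℝ) < 4*w^6 by positivity),
        div_le_iff₀ (show (0:ℝ) < 4*w^6 by positivity)]
      have hnn : (0:ℝ) ≤ u^4 := by positivity
      have h4w : (1:ℝ) ≤ 4*w^6 := by linarith
      have := mul_le_mul_of_nonneg_left h4w hnn
      linarith
    calc |-(z*u^3/w^4) - u^4/(4*w^6)| ≤ |z*u^3/w^4| + |u^4/(4*w^6)| := by
          rw [sub_eq_add_neg]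
          refine le_trans (abs_add_le _ _) ?_
          simp [abs_neg]
      _ ≤ _ := add_le_add e1 e2
  calc |f^2 - (w - z*u/w - u^2/(2*w^3))^2| / (f + (w - z*u/w - u^2/(2*w^3)))
      ≤ |f^2 - (w - z*u/w - u^2/(2*w^3))^2| := div_le_self (abs_nonneg _) hfP
    _ ≤ _ := hnum

lemma ptwise (z u : ℝ) (hz : |z| ≤ 1/10) (hu : |u| ≤ 1/5) :
    |Real.sqrt (1 - (z+u)^2) - (Real.sqrt (1 - z^2) - z*u/Real.sqrt (1 - z^2)
      - u^2/(2*Real.sqrt (1 - z^2)^3))| ≤ 2 * |z| * |u| ^ 3 + u^4 := by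
  have hz2 : z^2 ≤ 1/100 := by nlinarith [sq_abs z, abs_nonneg z]
  have hu2 : u^2 ≤ 1/25 := by nlinarith [sq_abs u, abs_nonneg u]
  have hzu2 : (z+u)^2 ≤ 9/100 := by
    nlinarith [sq_abs z, sq_abs u, abs_nonneg z, abs_nonneg u, mul_nonneg (abs_nonneg z) (abs_nonneg u), abs_mul z u, le_abs_self (z*u)]
  have h910 : (9:ℝ)/10 ≤ Real.sqrt (9/10) := by
    nlinarith [Real.sq_sqrt (show (0:ℝ) ≤ 9/10 by norm_num), Real.sqrt_nonneg (9/10 : ℝ)]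
  exact alg_bound z u _ _
    (Real.sq_sqrt (by nlinarith))
    (Real.sq_sqrt (by nlinarith))
    (le_trans h910 (Real.sqrt_le_sqrt (by nlinarith)))
    (le_trans h910 (Real.sqrt_le_sqrt (by nlinarith)))
    hz hu

lemma sum_approx {N : ℕ} (z : ℝ) (s : Fin N → ℝ)
    (hz : |z| ≤ 1/10) (hs : ∀ k, |s k| ≤ 1/10)
    (hmean : ∑ k, s k = N * z) :
    |(∑ k, Real.sqrt (1 - (s k)^2)) -
      ((N : ℝ) * Real.sqrt (1 - z^2) - (∑ k, (s k - z)^2)/(2*Real.sqrt (1 - z^2)^3))|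
    ≤ 2*|z| * (∑ k, |s k - z| ^ 3) + ∑ k, (s k - z)^4 := by
  have hu0 : ∑ k, (s k - z) = 0 := by
    rw [Finset.sum_sub_distrib, hmean, Finset.sum_const, Finset.card_univ, Fintype.card_fin,
      nsmul_eq_mul]
    ring
  have hsplit : (∑ k, Real.sqrt (1 - (s k)^2)) -
      ((N : ℝ) * Real.sqrt (1 - z^2) - (∑ k, (s k - z)^2)/(2*Real.sqrt (1 - z^2)^3))
      = ∑ k, (Real.sqrt (1 - (s k)^2) -
          (Real.sqrt (1 - z^2) - z*(s k - z)/Real.sqrt (1 - z^2)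
            - (s k - z)^2/(2*Real.sqrt (1 - z^2)^3))) := by
    rw [Finset.sum_sub_distrib]
    congr 1
    rw [Finset.sum_sub_distrib, Finset.sum_sub_distrib, Finset.sum_const, Finset.card_univ,
      Fintype.card_fin, nsmul_eq_mul]
    have h1 : ∑ k, z*(s k - z)/Real.sqrt (1 - z^2) = 0 := by
      rw [← Finset.sum_div, ← Finset.mul_sum, hu0, mul_zero, zero_div]
    rw [h1, ← Finset.sum_div]
    ring
  rw [hsplit]
  refine le_trans (Finset.abs_sum_le_sum_abs _ _) ?_
  rw [Finset.mul_sum, ← Finset.sum_add_distrib]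
  apply Finset.sum_le_sum
  intro k _
  have hu : |s k - z| ≤ 1/5 := by
    have h1 := hs k
    calc |s k - z| = |s k + -z| := by rw [sub_eq_add_neg]
      _ ≤ |s k| + |-z| := abs_add_le _ _
      _ = |s k| + |z| := by rw [abs_neg]
      _ ≤ 1/5 := by linarith
  have hk := ptwise z (s k - z) hz hu
  have hzs : z + (s k - z) = s k := by ring
  rw [hzs] at hk
  exact hk


lemma side_bound {N : ℕ} (z w M : ℝ) (hz110 : |z| ≤ 1/10) (hzM : |z| ≤ M)
    (hw : w = Real.sqrt (1 - z^2)) (s : Fin N → ℝ)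
    (hf1 : ∀ k, |s k| ≤ 1/10) (hfm : ∑ k, s k = (N : ℝ) * z) :
    |(∑ k, Real.sqrt (1 - (s k)^2)) - ((N : ℝ)*w - (∑ k, (s k - z)^2)/(2*w^3))|
      ≤ 2*M*(Real.sqrt (∑ k, (s k - z)^2) * ∑ k, (s k - z)^2) + (∑ k, (s k - z)^2)^2 := by
  have h1 := sum_approx z s hz110 hf1 hfm
  rw [← hw] at h1
  have c1 := cube_sum (fun k => s k - z)
  have c2 := quart_sum (fun k => s k - z)
  have h0 : 0 ≤ ∑ k, |s k - z| ^ 3 :=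
    Finset.sum_nonneg (fun k _ => by positivity)
  have b1 : 2*|z| * (∑ k, |s k - z| ^ 3)
      ≤ 2*M*(Real.sqrt (∑ k, (s k - z)^2) * ∑ k, (s k - z)^2) := by
    calc 2*|z| * (∑ k, |s k - z| ^ 3)
        ≤ 2*M * (∑ k, |s k - z| ^ 3) := mul_le_mul_of_nonneg_right (by linarith) h0
      _ ≤ _ := mul_le_mul_of_nonneg_left c1 (by linarith [abs_nonneg z])
  exact le_trans h1 (add_le_add b1 c2)

/-- Expansion of the energy function in terms of the dispersions: with
`z = (1/N) ∑ sin aₖ`, `D_U = (1/N) ∑ (sin aₖ - z)²`, `D_L = (1/N) ∑ (sin bₖ - z)²`, and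
`ℰ = (1/(2N)) (∑ cos aₖ - ∑ cos bₖ)`, one has
`|ℰ - (D_L - D_U)/(4 (1 - z²)^{3/2})| ≤ K (D_L + D_U)^{3/2} · max_k |θ_k|`
(the bound being stated for every upper bound `M` of the perturbation angles). -/
theorem energy_expansion (N : ℕ) (hN : 1 ≤ N) :
    ∃ δ > 0, ∃ K > 0, ∀ a b : Fin N → ℝ, ∀ M : ℝ,
      (∀ k, |a k| < δ) → (∀ k, |b k| < δ) →
      (∀ k, |a k| ≤ M) → (∀ k, |b k| ≤ M) →
      (∑ k, Real.sin (a k)) = (∑ k, Real.sin (b k)) →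
      |((∑ k, Real.cos (a k)) - ∑ k, Real.cos (b k)) / (2 * N) -
          ((∑ k, (Real.sin (b k) - (∑ j, Real.sin (a j)) / N) ^ 2) / N -
              (∑ k, (Real.sin (a k) - (∑ j, Real.sin (a j)) / N) ^ 2) / N) /
            (4 * Real.sqrt (1 - ((∑ j, Real.sin (a j)) / N) ^ 2) ^ 3)| ≤
        K * ((∑ k, (Real.sin (b k) - (∑ j, Real.sin (a j)) / N) ^ 2) / N +
              (∑ k, (Real.sin (a k) - (∑ j, Real.sin (a j)) / N) ^ 2) / N) ^ ((3 : ℝ) / 2) *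
          M := by
  have hN0 : (0:ℝ) < N := by exact_mod_cast Nat.lt_of_lt_of_le Nat.zero_lt_one hN
  refine ⟨1/10, by norm_num, 4*N, by linarith, ?_⟩
  intro a b M ha hb haM hbM hsum
  have k0 : Fin N := ⟨0, by omega⟩
  have hM0 : 0 ≤ M := le_trans (abs_nonneg _) (haM k0)
  set z := (∑ j, Real.sin (a j)) / (N : ℝ) with hzdef
  clear_value z
  have hmean_a : ∑ k, Real.sin (a k) = (N : ℝ) * z := by
    rw [hzdef]; field_simp
  have hmean_b : ∑ k, Real.sin (b k) = (N : ℝ) * z := by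
    rw [← hsum]; exact hmean_a
  have hsin_a : ∀ k, |Real.sin (a k)| ≤ 1/10 :=
    fun k => le_trans (Real.abs_sin_le_abs) (le_of_lt (ha k))
  have hsin_b : ∀ k, |Real.sin (b k)| ≤ 1/10 :=
    fun k => le_trans (Real.abs_sin_le_abs) (le_of_lt (hb k))
  have hsin_aM : ∀ k, |Real.sin (a k)| ≤ M :=
    fun k => le_trans (Real.abs_sin_le_abs) (haM k)
  have hsin_bM : ∀ k, |Real.sin (b k)| ≤ M :=
    fun k => le_trans (Real.abs_sin_le_abs) (hbM k)
  have habs_sum : ∀ (c : ℝ) (hc : ∀ k, |Real.sin (a k)| ≤ c), |z| ≤ c := by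
    intro c hc
    rw [hzdef, abs_div, abs_of_pos hN0, div_le_iff₀ hN0]
    calc |∑ j, Real.sin (a j)| ≤ ∑ j, |Real.sin (a j)| := Finset.abs_sum_le_sum_abs _ _
      _ ≤ ∑ _j : Fin N, c := Finset.sum_le_sum (fun j _ => hc j)
      _ = (N : ℝ) * c := by
          rw [Finset.sum_const, Finset.card_univ, Fintype.card_fin, nsmul_eq_mul]
      _ = c * N := by ring
  have hz110 : |z| ≤ 1/10 := habs_sum _ hsin_a
  have hzM : |z| ≤ M := habs_sum _ hsin_aM
  have hz2 : z^2 ≤ 1/100 := by nlinarith [sq_abs z, abs_nonneg z]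
  set w := Real.sqrt (1 - z^2) with hwdef
  clear_value w
  have hwpos : 0 < w := by rw [hwdef]; exact Real.sqrt_pos.mpr (by linarith)
  set Su := ∑ k, (Real.sin (a k) - z)^2 with hSudef
  clear_value Su
  set Sv := ∑ k, (Real.sin (b k) - z)^2 with hSvdef
  clear_value Sv
  have hSu0 : 0 ≤ Su := by rw [hSudef]; positivity
  have hSv0 : 0 ≤ Sv := by rw [hSvdef]; positivity
  -- variance bound
  have hvar : ∀ (f : Fin N → ℝ), (∀ k, |Real.sin (f k)| ≤ M) →
      (∑ k, Real.sin (f k) = (N : ℝ) * z) →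
      ∑ k, (Real.sin (f k) - z)^2 ≤ (N : ℝ) * M^2 := by
    intro f hfM hfm
    calc ∑ k, (Real.sin (f k) - z)^2
        = ∑ k, (Real.sin (f k)^2 - 2*z*Real.sin (f k) + z^2) :=
          Finset.sum_congr rfl (fun k _ => by ring)
      _ = (∑ k, Real.sin (f k)^2) - 2*z*(∑ k, Real.sin (f k)) + (N : ℝ)*z^2 := by
          rw [Finset.sum_add_distrib, Finset.sum_sub_distrib, Finset.sum_const,
            Finset.card_univ, Fintype.card_fin, nsmul_eq_mul, ← Finset.mul_sum]
      _ = (∑ k, Real.sin (f k)^2) - (N : ℝ)*z^2 := by rw [hfm]; ring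
      _ ≤ (N : ℝ)*M^2 - (N : ℝ)*z^2 := by
          have h1 : ∑ k, Real.sin (f k)^2 ≤ ∑ _k : Fin N, M^2 :=
            Finset.sum_le_sum (fun k _ => by
              nlinarith [hfM k, abs_nonneg (Real.sin (f k)), sq_abs (Real.sin (f k))])
          rw [Finset.sum_const, Finset.card_univ, Fintype.card_fin, nsmul_eq_mul] at h1
          linarith
      _ ≤ (N : ℝ)*M^2 := by nlinarith [sq_nonneg z]
  have hSuM : Su ≤ (N : ℝ) * M^2 := by rw [hSudef]; exact hvar a hsin_aM hmean_a
  have hSvM : Sv ≤ (N : ℝ) * M^2 := by rw [hSvdef]; exact hvar b hsin_bM hmean_b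
  -- cosine rewrite
  have hCa : (∑ k, Real.cos (a k)) = ∑ k, Real.sqrt (1 - Real.sin (a k)^2) :=
    Finset.sum_congr rfl (fun k _ => (cos_eq_sqrt (a k) (le_of_lt (ha k))).symm)
  have hCb : (∑ k, Real.cos (b k)) = ∑ k, Real.sqrt (1 - Real.sin (b k)^2) :=
    Finset.sum_congr rfl (fun k _ => (cos_eq_sqrt (b k) (le_of_lt (hb k))).symm)
  -- error bounds
  have hEa : |(∑ k, Real.cos (a k)) - ((N : ℝ)*w - Su/(2*w^3))|
      ≤ 2*M*(Real.sqrt Su * Su) + Su^2 := by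
    rw [hCa, hSudef]
    exact side_bound z w M hz110 hzM hwdef (fun k => Real.sin (a k)) hsin_a hmean_a
  have hEb : |(∑ k, Real.cos (b k)) - ((N : ℝ)*w - Sv/(2*w^3))|
      ≤ 2*M*(Real.sqrt Sv * Sv) + Sv^2 := by
    rw [hCb, hSvdef]
    exact side_bound z w M hz110 hzM hwdef (fun k => Real.sin (b k)) hsin_b hmean_b
  -- rearrange the main expression
  rw [rearrange (N:ℝ) w (∑ k, Real.cos (a k)) (∑ k, Real.cos (b k)) Su Sv
    (ne_of_gt hN0) (ne_of_gt hwpos)]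
  have h2N : (0:ℝ) < 2*(N:ℝ) := by linarith
  have hpow : ((Sv)/(N:ℝ) + Su/(N:ℝ)) ^ ((3 : ℝ)/2)
      = (Sv+Su)/(N:ℝ) * (Real.sqrt (Sv+Su)/Real.sqrt (N:ℝ)) := by
    have h1 : Sv/(N:ℝ) + Su/(N:ℝ) = (Sv+Su)/(N:ℝ) := (add_div Sv Su (N:ℝ)).symm
    have h2 : (0:ℝ) ≤ (Sv+Su)/(N:ℝ) := div_nonneg (by linarith) (le_of_lt hN0)
    rw [h1, show ((3:ℝ)/2) = 1 + 1/2 by norm_num, Real.rpow_add' h2 (by norm_num),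
      Real.rpow_one, ← Real.sqrt_eq_rpow, Real.sqrt_div (by linarith : (0:ℝ) ≤ Sv+Su)]
  calc |((∑ k, Real.cos (a k)) - ((N:ℝ)*w - Su/(2*w^3)) -
        ((∑ k, Real.cos (b k)) - ((N:ℝ)*w - Sv/(2*w^3))))/(2*(N:ℝ))|
      = |(∑ k, Real.cos (a k)) - ((N:ℝ)*w - Su/(2*w^3)) -
          ((∑ k, Real.cos (b k)) - ((N:ℝ)*w - Sv/(2*w^3)))|/(2*(N:ℝ)) := by
        rw [abs_div, abs_of_pos h2N]
    _ ≤ (|(∑ k, Real.cos (a k)) - ((N:ℝ)*w - Su/(2*w^3))| +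
          |(∑ k, Real.cos (b k)) - ((N:ℝ)*w - Sv/(2*w^3))|)/(2*(N:ℝ)) := by
        gcongr
        exact abs_sub _ _
    _ ≤ ((2*M*(Real.sqrt Su * Su) + Su^2) + (2*M*(Real.sqrt Sv * Sv) + Sv^2))/(2*(N:ℝ)) := by
        gcongr
    _ ≤ 4*(N:ℝ)*((Sv+Su)/(N:ℝ) * (Real.sqrt (Sv+Su)/Real.sqrt (N:ℝ))) * M :=
        final_arith (N:ℝ) M Su Sv (by exact_mod_cast hN) hM0 hSu0 hSv0
          (by linarith)
    _ = 4*(N:ℝ)*((Sv/(N:ℝ) + Su/(N:ℝ)) ^ ((3 : ℝ)/2)) * M := by rw [hpow]
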